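/- For every FPA equilibrium and every allocation pi* achieving OPT, it holds that sum_{i in A_Bbar1} sum_{j not in N(i)} Spend(j) + LW(A_Bbar1) ≥ OPT(A_Bbar1). -/

import Mathlib

open Finset
open scoped Classical

noncomputable section

/-- An allocation: each entry in `[0,1]`, and each query allocated total probability at most 1. -/
def IsAlloc {n q : ℕ} (π : Fin n → Fin q → ℝ) : Prop :=
  (∀ i j, 0 ≤ π i j) ∧ (∀ i j, π i j ≤ 1) ∧ ∀ j, ∑ i, π i j ≤ 1

/-- An integral (deterministic) allocation. -/
def IsIntegralAlloc {n q : ℕ} (π : Fin n → Fin q → ℝ) : Prop :=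
  IsAlloc π ∧ ∀ i j, π i j = 0 ∨ π i j = 1

/-- Liquid welfare of an allocation. -/
def allocLW {n q : ℕ} (B : Fin n → ℝ) (v π : Fin n → Fin q → ℝ) : ℝ :=
  ∑ i, min (B i) (∑ j, π i j * v i j)

/-- A deterministic tie-breaking / winner rule for first-price auctions:
given a bid profile, it selects on each query a bidder whose bid is maximal. -/
def IsWinnerRule {n q : ℕ} (W : (Fin n → Fin q → ℝ) → Fin q → Fin n) : Prop :=
  ∀ (b : Fin n → Fin q → ℝ) (j : Fin q) (i : Fin n), b i j ≤ b (W b j) j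

/-- The set of queries bidder `i` wins under bid profile `b`. -/
def fpaN {n q : ℕ} (W : (Fin n → Fin q → ℝ) → Fin q → Fin n)
    (b : Fin n → Fin q → ℝ) (i : Fin n) : Finset (Fin q) :=
  Finset.univ.filter fun j => W b j = i

/-- The total value bidder `i` obtains. -/
def fpaV {n q : ℕ} (v : Fin n → Fin q → ℝ) (W : (Fin n → Fin q → ℝ) → Fin q → Fin n)
    (b : Fin n → Fin q → ℝ) (i : Fin n) : ℝ :=
  ∑ j ∈ fpaN W b i, v i j

/-- The spend (winning bid) on query `j`. -/
def fpaSpendQ {n q : ℕ} (W : (Fin n → Fin q → ℝ) → Fin q → Fin n)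
    (b : Fin n → Fin q → ℝ) (j : Fin q) : ℝ :=
  b (W b j) j

/-- The total spend of bidder `i`. -/
def fpaSpendI {n q : ℕ} (W : (Fin n → Fin q → ℝ) → Fin q → Fin n)
    (b : Fin n → Fin q → ℝ) (i : Fin n) : ℝ :=
  ∑ j ∈ fpaN W b i, b i j

/-- Liquid welfare of a bid profile in FPA. -/
def fpaLW {n q : ℕ} (B : Fin n → ℝ) (v : Fin n → Fin q → ℝ)
    (W : (Fin n → Fin q → ℝ) → Fin q → Fin n) (b : Fin n → Fin q → ℝ) : ℝ :=
  ∑ i, min (B i) (fpaV v W b i)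

/-- Equilibrium of a first-price auction with ROS and budget constraints:
bids are nonnegative, each bidder satisfies their constraints, and for any deviation
of a single bidder, either the bidder's value does not increase, or a constraint is violated. -/
def IsFpaEq {n q : ℕ} (B : Fin n → ℝ) (v : Fin n → Fin q → ℝ)
    (W : (Fin n → Fin q → ℝ) → Fin q → Fin n) (b : Fin n → Fin q → ℝ) : Prop :=
  (∀ i j, 0 ≤ b i j) ∧
  (∀ i, fpaSpendI W b i ≤ min (B i) (fpaV v W b i)) ∧
  (∀ i (b' : Fin q → ℝ), (∀ j, 0 ≤ b' j) →
    (∑ j ∈ fpaN W (Function.update b i b') i, v i j ≤ fpaV v W b i) ∨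
    (min (B i) (∑ j ∈ fpaN W (Function.update b i b') i, v i j)
      < ∑ j ∈ fpaN W (Function.update b i b') i, b' j))

lemma stmt3_key {n q : ℕ} (B : Fin n → ℝ) (v : Fin n → Fin q → ℝ)
    (hv : ∀ i j, 0 ≤ v i j)
    (W : (Fin n → Fin q → ℝ) → Fin q → Fin n) (hW : IsWinnerRule W)
    (b : Fin n → Fin q → ℝ) (hb : IsFpaEq B v W b)
    (i : Fin n) (hVi : fpaV v W b i < B i)
    (j₀ : Fin q) (hj₀ : W b j₀ ≠ i) (hBle : B i ≤ v i j₀ + fpaV v W b i) :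
    B i ≤ (∑ j ∈ Finset.univ.filter (fun j : Fin q => W b j ≠ i), fpaSpendQ W b j)
      + fpaV v W b i := by
  by_contra h
  push_neg at h
  set S := ∑ j ∈ Finset.univ.filter (fun j : Fin q => W b j ≠ i), fpaSpendQ W b j with hS
  set V := fpaV v W b i with hV
  set ε := (B i - (S + V)) / (q + 1) with hε
  have hεpos : 0 < ε := by
    apply div_pos (by linarith) (by positivity)
  have hSpendnn : ∀ j, 0 ≤ fpaSpendQ W b j := fun j => hb.1 _ _
  have hj₀N : j₀ ∉ fpaN W b i := by
    simp [fpaN, hj₀]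
  set T : Finset (Fin q) := insert j₀ (fpaN W b i) with hT
  set b' : Fin q → ℝ := fun j => if j ∈ T then fpaSpendQ W b j + ε else 0 with hb'
  have hb'nn : ∀ j, 0 ≤ b' j := by
    intro j
    simp only [hb']
    split
    · have := hSpendnn j; linarith
    · exact le_rfl
  set b2 := Function.update b i b' with hb2
  have hwin : ∀ j ∈ T, W b2 j = i := by
    intro j hj
    by_contra hne
    have h2 : b2 i j ≤ b2 (W b2 j) j := hW b2 j i
    have h3 : b2 i j = b' j := by simp [hb2]
    have h1 : b2 (W b2 j) j = b (W b2 j) j := by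
      exact congrFun (Function.update_of_ne hne b' b) j
    have h4 : b (W b2 j) j ≤ fpaSpendQ W b j := hW b j (W b2 j)
    have h5 : b' j = fpaSpendQ W b j + ε := by simp [hb', hj]
    rw [h3, h1, h5] at h2
    linarith
  have hsub : T ⊆ fpaN W b2 i := by
    intro j hj
    simp [fpaN, hwin j hj]
  have hsumT : ∑ j ∈ T, v i j = v i j₀ + V := by
    rw [hT, Finset.sum_insert hj₀N]; rfl
  have hvalT : B i ≤ ∑ j ∈ T, v i j := by rw [hsumT]; exact hBle
  have hval' : B i ≤ ∑ j ∈ fpaN W b2 i, v i j := by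
    refine hvalT.trans (Finset.sum_le_sum_of_subset_of_nonneg hsub ?_)
    intro j _ _; exact hv i j
  rcases hb.2.2 i b' hb'nn with hc | hc
  · rw [← hb2] at hc
    exact absurd (hval'.trans hc) (not_le.mpr hVi)
  · rw [← hb2] at hc
    rw [min_eq_left hval'] at hc
    have hbd : ∑ j ∈ fpaN W b2 i, b' j ≤ ∑ j : Fin q, b' j :=
      Finset.sum_le_sum_of_subset_of_nonneg (Finset.subset_univ _)
        (fun j _ _ => hb'nn j)
    have huniv : ∑ j : Fin q, b' j = ∑ j ∈ T, (fpaSpendQ W b j + ε) := by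
      rw [hb']
      rw [Finset.sum_ite_mem]
      congr 1
      exact Finset.univ_inter T
    have hTsum : ∑ j ∈ T, (fpaSpendQ W b j + ε) =
        (∑ j ∈ T, fpaSpendQ W b j) + T.card * ε := by
      rw [Finset.sum_add_distrib, Finset.sum_const, nsmul_eq_mul]
    have hTSpend : ∑ j ∈ T, fpaSpendQ W b j = fpaSpendQ W b j₀ + fpaSpendI W b i := by
      rw [hT, Finset.sum_insert hj₀N]
      congr 1
      apply Finset.sum_congr rfl
      intro j hj
      have : W b j = i := by simpa [fpaN] using hj
      simp [fpaSpendQ, this]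
    have hSpendI : fpaSpendI W b i ≤ V := (hb.2.1 i).trans (min_le_right _ _)
    have hj₀S : fpaSpendQ W b j₀ ≤ S := by
      apply Finset.single_le_sum (fun j _ => hSpendnn j)
      simp [hj₀]
    have hcard : (T.card : ℝ) ≤ q := by
      have := Finset.card_le_univ T
      simp only [Finset.card_univ, Fintype.card_fin] at this
      exact_mod_cast this
    have hcε : (T.card : ℝ) * ε ≤ q * ε := by
      exact mul_le_mul_of_nonneg_right hcard hεpos.le
    have hqε : (q : ℝ) * ε < (q + 1) * ε := by
      apply mul_lt_mul_of_pos_right _ hεpos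
      linarith
    have hεval : ((q : ℝ) + 1) * ε = B i - (S + V) := by
      rw [hε]; field_simp
    linarith

/-- for every FPA equilibrium and optimal (fractional) allocation `πs`,
`∑_{i ∈ A_Bbar1} ∑_{j ∉ N(i)} Spend(j) + LW(A_Bbar1) ≥ OPT(A_Bbar1)`. -/
theorem stmt3 (n q : ℕ) (B : Fin n → ℝ) (v : Fin n → Fin q → ℝ)
    (hB : ∀ i, 0 < B i) (hv : ∀ i j, 0 ≤ v i j)
    (W : (Fin n → Fin q → ℝ) → Fin q → Fin n) (hW : IsWinnerRule W)
    (b : Fin n → Fin q → ℝ) (hb : IsFpaEq B v W b)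
    (πs : Fin n → Fin q → ℝ) (hπ : IsAlloc πs)
    (hopt : ∀ π : Fin n → Fin q → ℝ, IsAlloc π → allocLW B v π ≤ allocLW B v πs) :
    ∑ i ∈ Finset.univ.filter (fun i : Fin n => fpaV v W b i < B i ∧
        ∃ j, W b j ≠ i ∧ B i ≤ v i j + fpaV v W b i),
        ((∑ j ∈ Finset.univ.filter (fun j : Fin q => W b j ≠ i), fpaSpendQ W b j)
          + min (B i) (fpaV v W b i))
      ≥ ∑ i ∈ Finset.univ.filter (fun i : Fin n => fpaV v W b i < B i ∧
          ∃ j, W b j ≠ i ∧ B i ≤ v i j + fpaV v W b i),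
          min (B i) (∑ j, πs i j * v i j) := by
  apply Finset.sum_le_sum
  intro i hi
  simp only [Finset.mem_filter, Finset.mem_univ, true_and] at hi
  obtain ⟨hVi, j₀, hj₀, hBle⟩ := hi
  have hkey := stmt3_key B v hv W hW b hb i hVi j₀ hj₀ hBle
  have h1 : min (B i) (∑ j, πs i j * v i j) ≤ B i := min_le_left _ _
  rw [min_eq_right hVi.le]
  linarith
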